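/- For x > 0, the subdifferential of f_δ at (x,y,z) is the singleton {(-(|y|² + δ²z²)/(2x²), y/x, δ²z/x)}; at (0,0,0) the subdifferential of f_δ equals B_δ. -/

import Mathlib

open Classical

/-- The function `f_δ`, here valued in the extended reals `EReal` (it never takes the value
`-∞`, and is `+∞` outside `{x > 0} ∪ {(0,0,0)}`). -/
noncomputable def fEdelta (δ : ℝ) (d : ℕ) (p : ℝ × EuclideanSpace ℝ (Fin d) × ℝ) : EReal :=
  if 0 < p.1 then (((‖p.2.1‖ ^ 2 + δ ^ 2 * p.2.2 ^ 2) / (2 * p.1) : ℝ) : EReal)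
  else if p = 0 then 0 else ⊤

/-- The Euclidean pairing on `ℝ × ℝ^d × ℝ`. -/
noncomputable def pairing {d : ℕ} (q p : ℝ × EuclideanSpace ℝ (Fin d) × ℝ) : ℝ :=
  q.1 * p.1 + (inner ℝ q.2.1 p.2.1 : ℝ) + q.2.2 * p.2.2

/-- The subdifferential of `f_δ` at `p`: all `q` with `f(p') ≥ f(p) + ⟨q, p' - p⟩` for all `p'`. -/
noncomputable def subdiff (δ : ℝ) (d : ℕ) (p : ℝ × EuclideanSpace ℝ (Fin d) × ℝ) :
    Set (ℝ × EuclideanSpace ℝ (Fin d) × ℝ) :=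
  {q | ∀ p', fEdelta δ d p + ((pairing q (p' - p) : ℝ) : EReal) ≤ fEdelta δ d p'}

/-- The convex set `B_δ = {(a,b,c) : a + (|b|² + c²/δ²)/2 ≤ 0}`. -/
def Bdelta (δ : ℝ) (d : ℕ) : Set (ℝ × EuclideanSpace ℝ (Fin d) × ℝ) :=
  {q | q.1 + (1 / 2) * (‖q.2.1‖ ^ 2 + q.2.2 ^ 2 / δ ^ 2) ≤ 0}

lemma aux_nonpos {c M ε : ℝ} (hε : 0 < ε) (h : ∀ t : ℝ, 0 < t → t < ε → c ≤ t * M) : c ≤ 0 := by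
  by_contra hc
  push_neg at hc
  have hM : 0 < M := by nlinarith [h (ε/2) (by linarith) (by linarith)]
  have ht : 0 < min (ε/2) (c/(2*M)) := lt_min (by linarith) (by positivity)
  have h1 := h _ ht (lt_of_le_of_lt (min_le_left _ _) (by linarith))
  have h2 : min (ε/2) (c/(2*M)) * M ≤ (c/(2*M))*M :=
    mul_le_mul_of_nonneg_right (min_le_right _ _) hM.le
  have : (c/(2*M))*M = c/2 := by field_simp
  linarith

lemma fval (δ : ℝ) (d : ℕ) (x0 : ℝ) (y0 : EuclideanSpace ℝ (Fin d)) (z0 : ℝ) (h : 0 < x0) :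
    fEdelta δ d (x0, y0, z0) = (((‖y0‖ ^ 2 + δ ^ 2 * z0 ^ 2) / (2 * x0) : ℝ) : EReal) := by
  simp [fEdelta, h]

lemma f0 (δ : ℝ) (d : ℕ) : fEdelta δ d 0 = 0 := by
  simp [fEdelta]

lemma ftop (δ : ℝ) (d : ℕ) (p : ℝ × EuclideanSpace ℝ (Fin d) × ℝ) (h1 : ¬ 0 < p.1)
    (h2 : p ≠ 0) : fEdelta δ d p = ⊤ := by
  simp [fEdelta, h1, h2]

set_option maxHeartbeats 2000000 in
/-- For `x > 0` the subdifferential of `f_δ` at `(x,y,z)` is the singleton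
`{(-(|y|²+δ²z²)/(2x²), y/x, δ²z/x)}`, and at `(0,0,0)` it equals `B_δ`. -/
theorem fdelta_subdiff (δ : ℝ) (hδ : 0 < δ) (d : ℕ)
    (x : ℝ) (y : EuclideanSpace ℝ (Fin d)) (z : ℝ) (hx : 0 < x) :
    subdiff δ d (x, y, z) =
        {(-(‖y‖ ^ 2 + δ ^ 2 * z ^ 2) / (2 * x ^ 2), (1 / x) • y, δ ^ 2 * z / x)} ∧
      subdiff δ d 0 = Bdelta δ d := by
  have hxne : x ≠ 0 := ne_of_gt hx
  have hδne : δ ≠ 0 := ne_of_gt hδ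
  have hx2 : (0:ℝ) < 2*x := by positivity
  constructor
  · ext q
    obtain ⟨a, b, c⟩ := q
    simp only [Set.mem_singleton_iff, Prod.mk.injEq]
    constructor
    · intro hq
      have H : ∀ x' : ℝ, 0 < x' → ∀ (y' : EuclideanSpace ℝ (Fin d)) (z' : ℝ),
          (‖y‖^2 + δ^2*z^2)/(2*x) + (a*(x'-x) + (inner ℝ b (y'-y) : ℝ) + c*(z'-z))
            ≤ (‖y'‖^2 + δ^2*z'^2)/(2*x') := by
        intro x' hx' y' z'
        have h := hq (x', y', z')
        rw [fval δ d x y z hx, fval δ d x' y' z' hx', ← EReal.coe_add,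
          EReal.coe_le_coe_iff] at h
        simpa [pairing, Prod.mk_sub_mk] using h
      have hb : b = (1/x) • y := by
        set u : EuclideanSpace ℝ (Fin d) := b - (1/x) • y with hu
        have hbu : x * (inner ℝ b u : ℝ) = x * ‖u‖^2 + (inner ℝ y u : ℝ) := by
          have hxb : x • b = x • u + y := by
            rw [hu, smul_sub, smul_smul]
            rw [mul_one_div_cancel hxne, one_smul, sub_add_cancel]
          rw [← real_inner_smul_left, hxb, inner_add_left, real_inner_smul_left,
            real_inner_self_eq_norm_sq]
        have key : ∀ t : ℝ, 0 < t → t < 1 → ‖u‖^2 ≤ t * (‖u‖^2 / (2*x)) := by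
          intro t ht ht1
          have h1 := H x hx (y + t • u) z
          have hnorm : ‖y + t • u‖^2 = ‖y‖^2 + 2 * (t * (inner ℝ y u : ℝ)) + t^2 * ‖u‖^2 := by
            rw [norm_add_sq_real, real_inner_smul_right, norm_smul]
            simp [mul_pow, sq_abs]
          rw [add_sub_cancel_left, real_inner_smul_right, hnorm] at h1
          have h2 := mul_le_mul_of_nonneg_right h1 hx2.le
          rw [add_mul, div_mul_cancel₀ _ (ne_of_gt hx2), div_mul_cancel₀ _ (ne_of_gt hx2)] at h2
          rw [← mul_div_assoc, le_div_iff₀ hx2]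
          nlinarith [h2, hbu, ht, hx]
        have hu0 : ‖u‖^2 ≤ 0 := aux_nonpos one_pos key
        have hzu : u = 0 := by
          have : ‖u‖ = 0 := by nlinarith [norm_nonneg u]
          exact norm_eq_zero.mp this
        exact sub_eq_zero.mp hzu
      have hc : c = δ^2*z/x := by
        have key1 : ∀ t : ℝ, 0 < t → t < 1 → c*x - δ^2*z ≤ t * (δ^2/2) := by
          intro t ht ht1
          have h1 := H x hx y (z + t)
          simp only [sub_self, inner_zero_right, add_sub_cancel_left, mul_zero, zero_add] at h1
          have h2 := mul_le_mul_of_nonneg_right h1 hx2.le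
          rw [add_mul, div_mul_cancel₀ _ (ne_of_gt hx2), div_mul_cancel₀ _ (ne_of_gt hx2)] at h2
          nlinarith [h2, ht, hx]
        have key2 : ∀ t : ℝ, 0 < t → t < 1 → δ^2*z - c*x ≤ t * (δ^2/2) := by
          intro t ht ht1
          have h1 := H x hx y (z - t)
          simp only [sub_self, inner_zero_right, sub_sub_cancel_left, mul_zero, zero_add] at h1
          have h2 := mul_le_mul_of_nonneg_right h1 hx2.le
          rw [add_mul, div_mul_cancel₀ _ (ne_of_gt hx2), div_mul_cancel₀ _ (ne_of_gt hx2)] at h2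
          nlinarith [h2, ht, hx]
        have e1 := aux_nonpos one_pos key1
        have e2 := aux_nonpos one_pos key2
        field_simp
        linarith
      have ha : a = -(‖y‖ ^ 2 + δ ^ 2 * z ^ 2) / (2 * x ^ 2) := by
        have key1 : ∀ t : ℝ, 0 < t → t < x → 2*x^2*a + (‖y‖^2 + δ^2*z^2) ≤ t * (-(2*x)*a) := by
          intro t ht htx
          have hxt : (0:ℝ) < 2*(x+t) := by linarith
          have h1 := H (x+t) (by linarith) y z
          simp only [sub_self, inner_zero_right, add_sub_cancel_left, mul_zero, zero_add,
            add_zero] at h1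
          have h2 := mul_le_mul_of_nonneg_right h1 (mul_nonneg hx2.le hxt.le)
          rw [add_mul] at h2
          rw [show (‖y‖^2 + δ^2*z^2)/(2*x) * (2*x*(2*(x+t))) = (‖y‖^2 + δ^2*z^2)*(2*(x+t)) by
            field_simp] at h2
          rw [show (‖y‖^2 + δ^2*z^2)/(2*(x+t)) * (2*x*(2*(x+t))) = (‖y‖^2 + δ^2*z^2)*(2*x) by
            field_simp] at h2
          nlinarith [h2, ht, hx]
        have key2 : ∀ t : ℝ, 0 < t → t < x →
            -(2*x^2*a) - (‖y‖^2 + δ^2*z^2) ≤ t * (-(2*x)*a) := by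
          intro t ht htx
          have hxt : (0:ℝ) < 2*(x-t) := by linarith
          have h1 := H (x-t) (by linarith) y z
          simp only [sub_self, inner_zero_right, sub_sub_cancel_left, mul_zero, zero_add,
            add_zero] at h1
          have h2 := mul_le_mul_of_nonneg_right h1 (mul_nonneg hx2.le hxt.le)
          rw [add_mul] at h2
          rw [show (‖y‖^2 + δ^2*z^2)/(2*x) * (2*x*(2*(x-t))) = (‖y‖^2 + δ^2*z^2)*(2*(x-t)) by
            field_simp] at h2
          rw [show (‖y‖^2 + δ^2*z^2)/(2*(x-t)) * (2*x*(2*(x-t))) = (‖y‖^2 + δ^2*z^2)*(2*x) by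
            rw [div_mul_eq_mul_div, div_eq_iff (ne_of_gt hxt)]; ring] at h2
          nlinarith [h2, ht, hx]
        have e1 := aux_nonpos hx key1
        have e2 := aux_nonpos hx key2
        field_simp
        linarith
      exact ⟨ha, hb, hc⟩
    · rintro ⟨ha, hb, hc⟩
      subst ha hb hc
      intro p'
      obtain ⟨x', y', z'⟩ := p'
      by_cases hx' : 0 < x'
      · rw [fval δ d x y z hx, fval δ d x' y' z' hx', ← EReal.coe_add, EReal.coe_le_coe_iff]
        simp only [pairing, Prod.mk_sub_mk]
        have hx'ne : x' ≠ 0 := ne_of_gt hx'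
        have hin : (inner ℝ ((1 / x) • y) (y'-y) : ℝ) = (1/x) * ((inner ℝ y y' : ℝ) - ‖y‖^2) := by
          rw [real_inner_smul_left, inner_sub_right, real_inner_self_eq_norm_sq]
        rw [hin]
        have hexp : ‖x • y' - x' • y‖^2
            = x^2*‖y'‖^2 - 2*(x*x'*(inner ℝ y y' : ℝ)) + x'^2*‖y‖^2 := by
          rw [norm_sub_sq_real, real_inner_smul_left, real_inner_smul_right, norm_smul, norm_smul,
            real_inner_comm y' y, mul_pow, mul_pow, Real.norm_eq_abs, Real.norm_eq_abs,
            sq_abs, sq_abs]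
          ring
        have h1 : (0:ℝ) ≤ x^2*‖y'‖^2 - 2*(x*x'*(inner ℝ y y' : ℝ)) + x'^2*‖y‖^2 := by
          rw [← hexp]; positivity
        have h2 : (0:ℝ) ≤ (x*z' - x'*z)^2 := sq_nonneg _
        have key : (‖y'‖^2 + δ^2*z'^2)/(2*x')
            - ((‖y‖^2 + δ^2*z^2)/(2*x)
              + ((-(‖y‖ ^ 2 + δ ^ 2 * z ^ 2) / (2 * x ^ 2))*(x'-x)
                + (1/x) * ((inner ℝ y y' : ℝ) - ‖y‖^2) + (δ ^ 2 * z / x)*(z'-z)))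
            = (x^2*‖y'‖^2 - 2*(x*x'*(inner ℝ y y' : ℝ)) + x'^2*‖y‖^2)/(2*x^2*x')
              + δ^2*(x*z' - x'*z)^2/(2*x^2*x') := by
          field_simp
          ring
        have t1 : (0:ℝ) ≤ (x^2*‖y'‖^2 - 2*(x*x'*(inner ℝ y y' : ℝ)) + x'^2*‖y‖^2)/(2*x^2*x') :=
          div_nonneg h1 (by positivity)
        have t2 : (0:ℝ) ≤ δ^2*(x*z' - x'*z)^2/(2*x^2*x') :=
          div_nonneg (mul_nonneg (sq_nonneg δ) h2) (by positivity)
        have goal : (‖y‖ ^ 2 + δ ^ 2 * z ^ 2) / (2 * x) +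
            ((-(‖y‖ ^ 2 + δ ^ 2 * z ^ 2) / (2 * x ^ 2))*(x'-x)
              + (1/x) * ((inner ℝ y y' : ℝ) - ‖y‖^2) + (δ ^ 2 * z / x)*(z'-z))
            ≤ (‖y'‖^2 + δ^2*z'^2)/(2*x') := by linarith
        convert goal using 2 <;> ring
      · by_cases h0 : ((x', y', z') : ℝ × EuclideanSpace ℝ (Fin d) × ℝ) = 0
        · rw [h0, f0, fval δ d x y z hx, ← EReal.coe_add, EReal.coe_nonpos]
          have : ((0 : ℝ × EuclideanSpace ℝ (Fin d) × ℝ)) - (x, y, z) = (-x, -y, -z) := by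
            rw [zero_sub]
            rfl
          rw [this]
          simp only [pairing]
          rw [inner_neg_right, real_inner_smul_left, real_inner_self_eq_norm_sq]
          have : -(‖y‖ ^ 2 + δ ^ 2 * z ^ 2) / (2 * x ^ 2) * (-x)
              + -(1 / x * ‖y‖ ^ 2) + δ ^ 2 * z / x * (-z)
              = -((‖y‖ ^ 2 + δ ^ 2 * z ^ 2) / (2 * x)) := by
            field_simp
            ring
          rw [this]
          linarith [div_nonneg (by positivity : (0:ℝ) ≤ ‖y‖ ^ 2 + δ ^ 2 * z ^ 2) hx2.le]
        · rw [ftop δ d (x', y', z') hx' h0, fval δ d x y z hx, ← EReal.coe_add]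
          exact le_top
  · ext q
    obtain ⟨a, b, c⟩ := q
    constructor
    · intro hq
      have h := hq ((δ^2 : ℝ), (δ^2 : ℝ) • b, c)
      rw [sub_zero, f0, zero_add, fval δ d (δ^2) ((δ^2 : ℝ) • b) c (by positivity),
        EReal.coe_le_coe_iff] at h
      simp only [pairing] at h
      rw [real_inner_smul_right, real_inner_self_eq_norm_sq, norm_smul, mul_pow,
        Real.norm_eq_abs, sq_abs] at h
      have h2 := mul_le_mul_of_nonneg_right h (le_of_lt (show (0:ℝ) < 2*δ^2 by positivity))
      rw [div_mul_cancel₀ _ (show (2:ℝ)*δ^2 ≠ 0 by positivity)] at h2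
      have hw : c^2/δ^2 * δ^2 = c^2 := by field_simp
      show a + (1/2)*(‖b‖^2 + c^2/δ^2) ≤ 0
      nlinarith [h2, hw, pow_pos hδ 2, pow_pos hδ 4, sq_nonneg δ]
    · intro hq
      have hq : a + (1/2)*(‖b‖^2 + c^2/δ^2) ≤ 0 := hq
      intro p'
      obtain ⟨x', y', z'⟩ := p'
      rw [sub_zero, f0, zero_add]
      by_cases hx' : 0 < x'
      · rw [fval δ d x' y' z' hx', EReal.coe_le_coe_iff]
        simp only [pairing]
        have hq' : 2*δ^2*a + δ^2*‖b‖^2 + c^2 ≤ 0 := by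
          have h := mul_le_mul_of_nonneg_left hq (le_of_lt (show (0:ℝ) < 2*δ^2 by positivity))
          have e : 2*δ^2*(a + (1/2)*(‖b‖^2 + c^2/δ^2)) = 2*δ^2*a + δ^2*‖b‖^2 + c^2 := by
            field_simp; ring
          rw [mul_zero] at h
          linarith [e ▸ h]
        rw [le_div_iff₀ (by positivity)]
        have hq'' := mul_le_mul_of_nonneg_left hq' (sq_nonneg x')
        rw [mul_zero] at hq''
        have hby := mul_le_mul_of_nonneg_left (real_inner_le_norm b y')
          (le_of_lt (show (0:ℝ) < 2*x'*δ^2 by positivity))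
        have s1 := mul_nonneg (sq_nonneg δ) (sq_nonneg (x'*‖b‖ - ‖y'‖))
        have s2 := sq_nonneg (x'*c - δ^2*z')
        have main : δ^2*((a*x' + (inner ℝ b y' : ℝ) + c*z')*(2*x'))
            ≤ δ^2*(‖y'‖^2 + δ^2*z'^2) := by
          nlinarith [hq'', hby, s1, s2]
        exact le_of_mul_le_mul_left main (by positivity)
      · by_cases h0 : ((x', y', z') : ℝ × EuclideanSpace ℝ (Fin d) × ℝ) = 0
        · rw [h0, f0]
          simp [pairing]
        · rw [ftop δ d (x', y', z') hx' h0]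
          exact le_top
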